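/- Let p* maximize ∑_{u=1}^k p(u)^r(1−p(u))^n over Δ_k for r ≥ 1, n ≥ 1. Combining the structure results: p* has at most a single coordinate in (0, t_1), at most a single coordinate in (t_2, 1], and all coordinates in [t_1, t_2] are equal; hence the maximization of E_{r,n} over Δ_k reduces to an optimization over at most four scalar parameters (the two exceptional coordinate values, the common value in [t_1,t_2], and the number of coordinates taking that common value), independently of k. -/

import Mathlib

/-- Theorem 2: Let `p*` maximize `∑_u p(u)^r (1-p(u))^n` over `Δ_k` for
`r ≥ 1`, `n ≥ 1`, with `h(t) = t^r (1-t)^n` strictly concave on `[t₁, t₂]` and strictly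
convex on `[0, t₁)` and `(t₂, 1]`. Then: at most one coordinate of `p*` lies in
`(0, t₁)`, at most one lies in `(t₂, 1]`, and all coordinates in `[t₁, t₂]` are equal;
hence all coordinates of `p*` take at most four values `0, a, b, c` — the maximization
over `Δ_k` reduces to finitely many scalar parameters, independently of `k`. -/
theorem maximizer_four_parameters (k : ℕ) (r : ℝ) (hr : 1 ≤ r) (n : ℕ) (hn : 1 ≤ n)
    (t1 t2 : ℝ) (h01 : 0 ≤ t1) (h12 : t1 < t2) (h21 : t2 ≤ 1)
    (hconc : StrictConcaveOn ℝ (Set.Icc t1 t2) (fun t : ℝ => t ^ r * (1 - t) ^ n))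
    (hconvL : ConvexOn ℝ (Set.Icc (0 : ℝ) t1) (fun t : ℝ => t ^ r * (1 - t) ^ n))
    (hsconvL : StrictConvexOn ℝ (Set.Ico (0 : ℝ) t1) (fun t : ℝ => t ^ r * (1 - t) ^ n))
    (hconvR : ConvexOn ℝ (Set.Icc t2 (1 : ℝ)) (fun t : ℝ => t ^ r * (1 - t) ^ n))
    (hsconvR : StrictConvexOn ℝ (Set.Ioc t2 (1 : ℝ)) (fun t : ℝ => t ^ r * (1 - t) ^ n))
    (p : Fin k → ℝ) (hp0 : ∀ u, 0 ≤ p u) (hp1 : ∑ u, p u = 1)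
    (hopt : ∀ q : Fin k → ℝ, (∀ u, 0 ≤ q u) → ∑ u, q u = 1 →
      ∑ u, q u ^ r * (1 - q u) ^ n ≤ ∑ u, p u ^ r * (1 - p u) ^ n) :
    (∀ u v : Fin k, p u ∈ Set.Ioo 0 t1 → p v ∈ Set.Ioo 0 t1 → u = v) ∧
    (∀ u v : Fin k, p u ∈ Set.Ioc t2 1 → p v ∈ Set.Ioc t2 1 → u = v) ∧
    (∀ u v : Fin k, p u ∈ Set.Icc t1 t2 → p v ∈ Set.Icc t1 t2 → p u = p v) ∧
    ∃ a b c : ℝ, ∀ u : Fin k, p u = 0 ∨ p u = a ∨ p u = b ∨ p u = c := by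
  classical
  set h : ℝ → ℝ := fun t : ℝ => t ^ r * (1 - t) ^ n with hh
  -- sums differing on two coordinates
  have hsum2 : ∀ (f g : Fin k → ℝ) (u v : Fin k), u ≠ v →
      (∀ w, w ≠ u → w ≠ v → f w = g w) →
      ∑ w, f w = ∑ w, g w + (f u - g u) + (f v - g v) := by
    intro f g u v huv hfg
    have h1 : ∑ w ∈ ({u, v} : Finset (Fin k)), (f w - g w) = ∑ w, (f w - g w) := by
      apply Finset.sum_subset (Finset.subset_univ _)
      intro x _ hx
      simp only [Finset.mem_insert, Finset.mem_singleton] at hx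
      push_neg at hx
      rw [hfg x hx.1 hx.2]; ring
    rw [Finset.sum_pair huv] at h1
    have h2 : ∑ w, (f w - g w) = ∑ w, f w - ∑ w, g w := Finset.sum_sub_distrib _ _
    linarith
  -- exchange argument
  have exch : ∀ u v : Fin k, u ≠ v → ∀ a b : ℝ, 0 ≤ a → 0 ≤ b →
      a + b = p u + p v → h a + h b ≤ h (p u) + h (p v) := by
    intro u v huv a b ha hb hab
    set q : Fin k → ℝ := fun w => if w = u then a else if w = v then b else p w with hq
    have hq0 : ∀ w, 0 ≤ q w := by
      intro w
      simp only [hq]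
      split_ifs with h1 h2
      · exact ha
      · exact hb
      · exact hp0 w
    have hqoff : ∀ w, w ≠ u → w ≠ v → q w = p w := by
      intro w h1 h2; simp [hq, h1, h2]
    have hqu : q u = a := by simp [hq]
    have hqv : q v = b := by simp [hq, Ne.symm huv]
    have hq1 : ∑ w, q w = 1 := by
      have := hsum2 q p u v huv hqoff
      rw [hp1, hqu, hqv] at this
      rw [this]; linarith
    have hle := hopt q hq0 hq1
    have hsq := hsum2 (fun w => q w ^ r * (1 - q w) ^ n)
      (fun w => p w ^ r * (1 - p w) ^ n) u v huv
      (fun w h1 h2 => by simp only [hqoff w h1 h2])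
    simp only [hqu, hqv] at hsq
    rw [hsq] at hle
    simp only [hh]
    linarith
  have hle1 : ∀ u, p u ≤ 1 := by
    intro u
    calc p u ≤ ∑ w, p w := Finset.single_le_sum (fun i _ => hp0 i) (Finset.mem_univ u)
    _ = 1 := hp1
  have hpair : ∀ u v : Fin k, u ≠ v → p u + p v ≤ 1 := by
    intro u v huv
    have hsub := Finset.sum_le_sum_of_subset_of_nonneg
      (Finset.subset_univ ({u, v} : Finset (Fin k))) (fun i _ _ => hp0 i)
    rw [Finset.sum_pair huv, hp1] at hsub
    exact hsub
  -- Claim 1: at most one coordinate in (0, t1)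
  have claim1 : ∀ u v : Fin k, p u ∈ Set.Ioo 0 t1 → p v ∈ Set.Ioo 0 t1 → u = v := by
    intro u v hu hv
    by_contra huv
    obtain ⟨hx0, hx1⟩ := hu
    obtain ⟨hy0, hy1⟩ := hv
    obtain ⟨ε, hε0, e1, e2, e3, e4⟩ : ∃ ε : ℝ, 0 < ε ∧ ε < p u ∧ p u + ε < t1 ∧
        ε < p v ∧ p v + ε < t1 := by
      refine ⟨min (min (p u) (t1 - p u)) (min (p v) (t1 - p v)) / 2, ?_, ?_, ?_, ?_, ?_⟩ <;>
      · have g := lt_min (lt_min hx0 (sub_pos.2 hx1)) (lt_min hy0 (sub_pos.2 hy1))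
        have h1 := min_le_left (min (p u) (t1 - p u)) (min (p v) (t1 - p v))
        have h2 := min_le_right (min (p u) (t1 - p u)) (min (p v) (t1 - p v))
        have h3 := min_le_left (p u) (t1 - p u)
        have h4 := min_le_right (p u) (t1 - p u)
        have h5 := min_le_left (p v) (t1 - p v)
        have h6 := min_le_right (p v) (t1 - p v)
        linarith
    have mem1 : p u - ε ∈ Set.Ico (0 : ℝ) t1 := ⟨by linarith, by linarith⟩
    have mem2 : p u + ε ∈ Set.Ico (0 : ℝ) t1 := ⟨by linarith, by linarith⟩
    have mem3 : p v - ε ∈ Set.Ico (0 : ℝ) t1 := ⟨by linarith, by linarith⟩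
    have mem4 : p v + ε ∈ Set.Ico (0 : ℝ) t1 := ⟨by linarith, by linarith⟩
    have hcx : 2 * h (p u) < h (p u - ε) + h (p u + ε) := by
      have hmid := hsconvL.2 mem1 mem2 (by linarith : p u - ε ≠ p u + ε)
        (by norm_num : (0:ℝ) < 1/2) (by norm_num : (0:ℝ) < 1/2) (by norm_num)
      simp only [smul_eq_mul] at hmid
      have hm : (1/2 : ℝ) * (p u - ε) + (1/2 : ℝ) * (p u + ε) = p u := by ring
      rw [hm] at hmid
      linarith
    have hcy : 2 * h (p v) < h (p v - ε) + h (p v + ε) := by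
      have hmid := hsconvL.2 mem3 mem4 (by linarith : p v - ε ≠ p v + ε)
        (by norm_num : (0:ℝ) < 1/2) (by norm_num : (0:ℝ) < 1/2) (by norm_num)
      simp only [smul_eq_mul] at hmid
      have hm : (1/2 : ℝ) * (p v - ε) + (1/2 : ℝ) * (p v + ε) = p v := by ring
      rw [hm] at hmid
      linarith
    have E1 := exch u v huv (p u + ε) (p v - ε) (by linarith) (by linarith) (by ring)
    have E2 := exch u v huv (p u - ε) (p v + ε) (by linarith) (by linarith) (by ring)
    linarith
  -- Claim 2: at most one coordinate in (t2, 1]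
  have claim2 : ∀ u v : Fin k, p u ∈ Set.Ioc t2 1 → p v ∈ Set.Ioc t2 1 → u = v := by
    intro u v hu hv
    by_contra huv
    obtain ⟨hx0, hx1⟩ := hu
    obtain ⟨hy0, hy1⟩ := hv
    have ht2 : 0 < t2 := lt_of_le_of_lt h01 h12
    have hxy : p u + p v ≤ 1 := hpair u v huv
    have hx1' : p u < 1 := by linarith
    have hy1' : p v < 1 := by linarith
    obtain ⟨ε, hε0, e1, e2, e3, e4⟩ : ∃ ε : ℝ, 0 < ε ∧ t2 < p u - ε ∧ p u + ε ≤ 1 ∧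
        t2 < p v - ε ∧ p v + ε ≤ 1 := by
      refine ⟨min (min (p u - t2) (1 - p u)) (min (p v - t2) (1 - p v)) / 2,
        ?_, ?_, ?_, ?_, ?_⟩ <;>
      · have g := lt_min (lt_min (sub_pos.2 hx0) (sub_pos.2 hx1'))
          (lt_min (sub_pos.2 hy0) (sub_pos.2 hy1'))
        have h1 := min_le_left (min (p u - t2) (1 - p u)) (min (p v - t2) (1 - p v))
        have h2 := min_le_right (min (p u - t2) (1 - p u)) (min (p v - t2) (1 - p v))
        have h3 := min_le_left (p u - t2) (1 - p u)
        have h4 := min_le_right (p u - t2) (1 - p u)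
        have h5 := min_le_left (p v - t2) (1 - p v)
        have h6 := min_le_right (p v - t2) (1 - p v)
        linarith
    have mem1 : p u - ε ∈ Set.Ioc t2 (1 : ℝ) := ⟨by linarith, by linarith⟩
    have mem2 : p u + ε ∈ Set.Ioc t2 (1 : ℝ) := ⟨by linarith, by linarith⟩
    have mem3 : p v - ε ∈ Set.Ioc t2 (1 : ℝ) := ⟨by linarith, by linarith⟩
    have mem4 : p v + ε ∈ Set.Ioc t2 (1 : ℝ) := ⟨by linarith, by linarith⟩
    have hcx : 2 * h (p u) < h (p u - ε) + h (p u + ε) := by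
      have hmid := hsconvR.2 mem1 mem2 (by linarith : p u - ε ≠ p u + ε)
        (by norm_num : (0:ℝ) < 1/2) (by norm_num : (0:ℝ) < 1/2) (by norm_num)
      simp only [smul_eq_mul] at hmid
      have hm : (1/2 : ℝ) * (p u - ε) + (1/2 : ℝ) * (p u + ε) = p u := by ring
      rw [hm] at hmid
      linarith
    have hcy : 2 * h (p v) < h (p v - ε) + h (p v + ε) := by
      have hmid := hsconvR.2 mem3 mem4 (by linarith : p v - ε ≠ p v + ε)
        (by norm_num : (0:ℝ) < 1/2) (by norm_num : (0:ℝ) < 1/2) (by norm_num)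
      simp only [smul_eq_mul] at hmid
      have hm : (1/2 : ℝ) * (p v - ε) + (1/2 : ℝ) * (p v + ε) = p v := by ring
      rw [hm] at hmid
      linarith
    have E1 := exch u v huv (p u + ε) (p v - ε) (by linarith) (by linarith) (by ring)
    have E2 := exch u v huv (p u - ε) (p v + ε) (by linarith) (by linarith) (by ring)
    linarith
  -- Claim 3: all coordinates in [t1, t2] equal
  have claim3 : ∀ u v : Fin k, p u ∈ Set.Icc t1 t2 → p v ∈ Set.Icc t1 t2 → p u = p v := by
    intro u v hu hv
    by_contra hne
    have huv : u ≠ v := fun e => hne (by rw [e])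
    have hm : (1/2 : ℝ) * p u + (1/2 : ℝ) * p v = (p u + p v) / 2 := by ring
    have hmid := hconc.2 hu hv hne
      (by norm_num : (0:ℝ) < 1/2) (by norm_num : (0:ℝ) < 1/2) (by norm_num)
    simp only [smul_eq_mul] at hmid
    rw [hm] at hmid
    have E := exch u v huv ((p u + p v) / 2) ((p u + p v) / 2)
      (by have := hu.1; have := hv.1; linarith) (by have := hu.1; have := hv.1; linarith)
      (by ring)
    linarith
  refine ⟨claim1, claim2, claim3, ?_⟩
  -- extract the (at most) three nonzero values
  obtain ⟨a, ha⟩ : ∃ a, ∀ u, p u ∈ Set.Ioo 0 t1 → p u = a := by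
    by_cases hA : ∃ u, p u ∈ Set.Ioo 0 t1
    · obtain ⟨w, hw⟩ := hA
      exact ⟨p w, fun u hu => by rw [claim1 u w hu hw]⟩
    · exact ⟨0, fun u hu => absurd ⟨u, hu⟩ hA⟩
  obtain ⟨b, hb⟩ : ∃ b, ∀ u, p u ∈ Set.Ioc t2 1 → p u = b := by
    by_cases hB : ∃ u, p u ∈ Set.Ioc t2 1
    · obtain ⟨w, hw⟩ := hB
      exact ⟨p w, fun u hu => by rw [claim2 u w hu hw]⟩
    · exact ⟨0, fun u hu => absurd ⟨u, hu⟩ hB⟩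
  obtain ⟨c, hc⟩ : ∃ c, ∀ u, p u ∈ Set.Icc t1 t2 → p u = c := by
    by_cases hC : ∃ u, p u ∈ Set.Icc t1 t2
    · obtain ⟨w, hw⟩ := hC
      exact ⟨p w, fun u hu => claim3 u w hu hw⟩
    · exact ⟨0, fun u hu => absurd ⟨u, hu⟩ hC⟩
  refine ⟨a, b, c, fun u => ?_⟩
  rcases eq_or_lt_of_le (hp0 u) with h0 | h0
  · exact Or.inl h0.symm
  rcases lt_or_ge (p u) t1 with h1 | h1
  · exact Or.inr (Or.inl (ha u ⟨h0, h1⟩))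
  rcases le_or_gt (p u) t2 with h2 | h2
  · exact Or.inr (Or.inr (Or.inr (hc u ⟨h1, h2⟩)))
  · exact Or.inr (Or.inr (Or.inl (hb u ⟨h2, hle1 u⟩)))
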